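/- Let (Ω, F, P) be a probability space with a filtration (F_k)_{k∈ℕ}, and let (Z_k)_{k∈ℕ} be an adapted sequence of integrable nonnegative real random variables. Let K ∈ ℕ and let φ : ℝ × ℕ → ℝ be such that for each k < K the map z ↦ φ(z, k) is concave and monotone nondecreasing on [0, ∞). Suppose that for all k < K, E[Z_{k+1} | F_k] ≤ Z_k + φ(Z_k, k) almost surely. Define X(0) = E[Z_0] and X(k+1) = X(k) + φ(X(k), k). Then E[Z_t] ≤ X(t) for all t ≤ K. -/

import Mathlib

open MeasureTheory

/-- A concave function on `[0, ∞)` admits a supporting line at any interior point `a > 0`. -/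
lemma concave_support_line {g : ℝ → ℝ} (hg : ConcaveOn ℝ (Set.Ici 0) g)
    {a : ℝ} (ha : 0 < a) :
    ∃ m : ℝ, ∀ z ∈ Set.Ici (0 : ℝ), g z ≤ g a + m * (z - a) := by
  set S : Set ℝ := (fun z => (g z - g a) / (z - a)) '' Set.Ioi a with hS
  have hne : S.Nonempty := ⟨_, ⟨a + 1, by simp, rfl⟩⟩
  have hub : ∀ z, 0 ≤ z → z < a → (g a - g z) / (a - z) ∈ upperBounds S := by
    rintro z hz0 hza _ ⟨w, hw, rfl⟩
    exact hg.slope_anti_adjacent hz0 (le_of_lt (lt_trans ha hw)) hza hw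
  have hbdd : BddAbove S := ⟨_, hub (a / 2) (by positivity) (by linarith)⟩
  refine ⟨sSup S, fun z hz => ?_⟩
  rcases lt_trichotomy z a with hlt | heq | hgt
  · have hm : sSup S ≤ (g a - g z) / (a - z) := csSup_le hne (hub z hz hlt)
    have haz : 0 < a - z := by linarith
    have h2 : sSup S * (a - z) ≤ g a - g z := by
      calc sSup S * (a - z) ≤ (g a - g z) / (a - z) * (a - z) := by
            exact mul_le_mul_of_nonneg_right hm haz.le
        _ = g a - g z := by field_simp
    nlinarith
  · subst heq; simp
  · have hm : (g z - g a) / (z - a) ≤ sSup S := le_csSup hbdd ⟨z, hgt, rfl⟩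
    have hza : 0 < z - a := by linarith
    have h2 : g z - g a ≤ sSup S * (z - a) := by
      calc g z - g a = (g z - g a) / (z - a) * (z - a) := by field_simp
        _ ≤ sSup S * (z - a) := mul_le_mul_of_nonneg_right hm hza.le
    linarith

/-- upper bound on the expected infection cardinality.  If `(Z k)` is an
adapted, integrable, nonnegative process with
`E[Z (k+1) | F k] ≤ Z k + φ (Z k, k)` a.s. for all `k < K`, where `z ↦ φ (z, k)` is
concave and monotone nondecreasing on `[0, ∞)` for each `k < K`, and `X` is the
deterministic recursion `X 0 = E[Z 0]`, `X (k+1) = X k + φ (X k, k)`, then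
`E[Z t] ≤ X t` for all `t ≤ K`. -/
theorem expected_infection_upper_bound
    {Ω : Type*} {m0 : MeasurableSpace Ω} {P : Measure Ω} [IsProbabilityMeasure P]
    (F : Filtration ℕ m0) (Z : ℕ → Ω → ℝ)
    (hadapt : Adapted F Z) (hint : ∀ k, Integrable (Z k) P)
    (hpos : ∀ k ω, 0 ≤ Z k ω)
    (K : ℕ) (φ : ℝ × ℕ → ℝ)
    (hconc : ∀ k < K, ConcaveOn ℝ (Set.Ici (0 : ℝ)) (fun z => φ (z, k)))
    (hmono : ∀ k < K, MonotoneOn (fun z => φ (z, k)) (Set.Ici (0 : ℝ)))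
    (hcond : ∀ k < K, ∀ᵐ ω ∂P, (P[Z (k + 1)|F k]) ω ≤ Z k ω + φ (Z k ω, k))
    (X : ℕ → ℝ) (hX0 : X 0 = ∫ ω, Z 0 ω ∂P)
    (hXrec : ∀ k : ℕ, X (k + 1) = X k + φ (X k, k)) :
    ∀ t ≤ K, ∫ ω, Z t ω ∂P ≤ X t := by
  intro t
  induction t with
  | zero => intro _; exact le_of_eq hX0.symm
  | succ t ih =>
    intro htK
    have ht : t < K := Nat.lt_of_succ_le htK
    have ihe : ∫ ω, Z t ω ∂P ≤ X t := ih (le_of_lt ht)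
    set a : ℝ := ∫ ω, Z t ω ∂P with ha
    have ha0 : 0 ≤ a := integral_nonneg (hpos t)
    have hXt0 : (0 : ℝ) ≤ X t := le_trans ha0 ihe
    have hce : ∫ ω, Z (t + 1) ω ∂P = ∫ ω, (P[Z (t + 1)|F t]) ω ∂P :=
      (integral_condExp (F.le t)).symm
    have key : ∫ ω, (P[Z (t + 1)|F t]) ω ∂P ≤ a + φ (a, t) := by
      rcases eq_or_lt_of_le ha0 with hz | hapos
      · -- a = 0 : Z t = 0 a.e.
        have hZ0 : Z t =ᵐ[P] 0 := by
          rw [← integral_eq_zero_iff_of_nonneg (hpos t) (hint t)]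
          exact hz.symm
        have hle : ∀ᵐ ω ∂P, (P[Z (t + 1)|F t]) ω ≤ (fun _ => φ (0, t)) ω := by
          filter_upwards [hcond t ht, hZ0] with ω h1 h2
          simpa [h2] using h1
        calc ∫ ω, (P[Z (t + 1)|F t]) ω ∂P ≤ ∫ _ω, φ (0, t) ∂P :=
              integral_mono_ae integrable_condExp (integrable_const _) hle
          _ = φ (0, t) := by simp
          _ ≤ a + φ (a, t) := by rw [← hz, zero_add]
      · -- a > 0 : supporting line
        obtain ⟨m, hm⟩ := concave_support_line (hconc t ht) hapos
        have hle : ∀ᵐ ω ∂P, (P[Z (t + 1)|F t]) ω ≤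
            (fun ω => (1 + m) * Z t ω + (φ (a, t) - m * a)) ω := by
          filter_upwards [hcond t ht] with ω h1
          have := hm (Z t ω) (hpos t ω)
          nlinarith
        have hintR : Integrable (fun ω => (1 + m) * Z t ω + (φ (a, t) - m * a)) P :=
          ((hint t).const_mul _).add (integrable_const _)
        calc ∫ ω, (P[Z (t + 1)|F t]) ω ∂P
            ≤ ∫ ω, ((1 + m) * Z t ω + (φ (a, t) - m * a)) ∂P :=
              integral_mono_ae integrable_condExp hintR hle
          _ = (1 + m) * a + (φ (a, t) - m * a) := by
              rw [integral_add ((hint t).const_mul _) (integrable_const _),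
                integral_const_mul, integral_const]
              simp [ha]
          _ = a + φ (a, t) := by ring
    have hmonot : φ (a, t) ≤ φ (X t, t) := hmono t ht ha0 hXt0 ihe
    calc ∫ ω, Z (t + 1) ω ∂P = ∫ ω, (P[Z (t + 1)|F t]) ω ∂P := hce
      _ ≤ a + φ (a, t) := key
      _ ≤ X t + φ (X t, t) := add_le_add ihe hmonot
      _ = X (t + 1) := (hXrec t).symm
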